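/- For every integer t ≥ 1, the following identity of formal power series over ℤ holds: ∑_{n≥0} p̄_{-t}(n) q^n = ( ∏_{i≥0} φ(q^{2^i})^{2^i} )^t, where the infinite product converges in the formal power series topology (for each fixed power of q, only finitely many factors contribute). -/

import Mathlib

open scoped Classical

/-- The infinite product `∏_{k ≥ 0} f k` of formal power series, in the situation where,
for each fixed power of `q`, only finitely many factors contribute: the coefficient of
`q^n` is read off from the product of the factors `f 0, …, f n` (all later factors are
assumed to be `1 + O(q^{n+1})`). -/
noncomputable def seriesProd (f : ℕ → PowerSeries ℤ) : PowerSeries ℤ :=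
  PowerSeries.mk fun n => PowerSeries.coeff n (∏ k ∈ Finset.range (n + 1), f k)

/-- The generating function `∏_{k ≥ 1} (1 - q^{2k})^t / (1 - q^k)^{2t}`
for `t`-colored overpartitions. -/
noncomputable def overGF (t : ℕ) : PowerSeries ℤ :=
  seriesProd fun k =>
    (1 - (PowerSeries.X : PowerSeries ℤ) ^ (2 * (k + 1))) ^ t *
      (PowerSeries.invOfUnit (1 - (PowerSeries.X : PowerSeries ℤ) ^ (k + 1)) 1) ^ (2 * t)

/-- `p̄_{-t}(n)`, the number of `t`-colored overpartitions of `n`: the coefficient of `q^n`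
in `∏_{k ≥ 1} (1 - q^{2k})^t / (1 - q^k)^{2t}`. -/
noncomputable def pbar (t n : ℕ) : ℤ :=
  PowerSeries.coeff n (overGF t)

/-- Ramanujan's theta function `φ(q^m) = 1 + 2 ∑_{k ≥ 1} q^{m k²}`. -/
noncomputable def phi (m : ℕ) : PowerSeries ℤ :=
  PowerSeries.mk fun n =>
    if n = 0 then 1 else if ∃ k : ℕ, 0 < k ∧ n = m * k ^ 2 then 2 else 0

/-- `φ(-q) = 1 + 2 ∑_{k ≥ 1} (-1)^{k²} q^{k²}` (note `(-1)^{k²} = (-1)^n` at `n = k²`). -/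
noncomputable def phiNeg : PowerSeries ℤ :=
  PowerSeries.mk fun n =>
    if n = 0 then 1 else if ∃ k : ℕ, 0 < k ∧ n = k ^ 2 then 2 * (-1) ^ n else 0

/-- Ramanujan's theta function `ψ(q^m) = ∑_{k ≥ 0} q^{m·k(k+1)/2}`. -/
noncomputable def psi (m : ℕ) : PowerSeries ℤ :=
  PowerSeries.mk fun n => if ∃ k : ℕ, 2 * n = m * (k * (k + 1)) then 1 else 0

/-- `f_r = ∏_{j ≥ 1} (1 - q^{r j})`. -/
noncomputable def fr (r : ℕ) : PowerSeries ℤ :=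
  seriesProd fun j => 1 - (PowerSeries.X : PowerSeries ℤ) ^ (r * (j + 1))

namespace OverAux
open PowerSeries Finset

lemma coeff_eq_of_dvd {a b : PowerSeries ℤ} {n : ℕ} (h : (X : PowerSeries ℤ) ^ (n+1) ∣ a - b) :
    coeff n a = coeff n b := by
  have h2 := (PowerSeries.X_pow_dvd_iff.mp h) n (Nat.lt_succ_self n)
  rw [map_sub, sub_eq_zero] at h2
  exact h2

lemma dvd_prod_sub_one {s : Finset ℕ} {f : ℕ → PowerSeries ℤ} {d : PowerSeries ℤ}
    (h : ∀ i ∈ s, d ∣ f i - 1) : d ∣ (∏ i ∈ s, f i) - 1 := by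
  classical
  induction s using Finset.induction_on with
  | empty => simp
  | @insert a s hx ih =>
    rw [Finset.prod_insert hx]
    have h1 : d ∣ f a - 1 := h a (Finset.mem_insert_self a s)
    have h2 : d ∣ (∏ i ∈ s, f i) - 1 := ih fun i hi => h i (Finset.mem_insert_of_mem hi)
    have : f a * (∏ i ∈ s, f i) - 1 = f a * ((∏ i ∈ s, f i) - 1) + (f a - 1) := by ring
    rw [this]
    exact dvd_add (Dvd.dvd.mul_left h2 _) h1

lemma dvd_prod_sub_prod {f : ℕ → PowerSeries ℤ} (hf : ∀ k, (X : PowerSeries ℤ) ^ (k+1) ∣ f k - 1)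
    {n N M : ℕ} (hN : n + 1 ≤ N) (hM : N ≤ M) :
    (X : PowerSeries ℤ) ^ (n+1) ∣ (∏ k ∈ range M, f k) - ∏ k ∈ range N, f k := by
  rw [← Finset.prod_range_mul_prod_Ico f hM]
  have e : (∏ k ∈ range N, f k) * (∏ k ∈ Ico N M, f k) - ∏ k ∈ range N, f k
      = (∏ k ∈ range N, f k) * ((∏ k ∈ Ico N M, f k) - 1) := by ring
  rw [e]
  refine Dvd.dvd.mul_left ?_ _
  refine dvd_prod_sub_one fun i hi => ?_
  have hiN : N ≤ i := (Finset.mem_Ico.mp hi).1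
  exact dvd_trans (pow_dvd_pow X (by omega)) (hf i)

lemma coeff_seriesProd_eq {f : ℕ → PowerSeries ℤ}
    (hf : ∀ k, (X : PowerSeries ℤ) ^ (k+1) ∣ f k - 1) {n N : ℕ} (h : n + 1 ≤ N) :
    coeff n (seriesProd f) = coeff n (∏ k ∈ range N, f k) := by
  have : coeff n (seriesProd f) = coeff n (∏ k ∈ range (n+1), f k) := by
    simp [seriesProd]
  rw [this]
  exact (coeff_eq_of_dvd (dvd_prod_sub_prod hf le_rfl h)).symm

lemma seriesProd_sub_dvd {f : ℕ → PowerSeries ℤ}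
    (hf : ∀ k, (X : PowerSeries ℤ) ^ (k+1) ∣ f k - 1) (n : ℕ) :
    (X : PowerSeries ℤ) ^ (n+1) ∣ seriesProd f - ∏ k ∈ range (n+1), f k := by
  rw [PowerSeries.X_pow_dvd_iff]
  intro m hm
  rw [map_sub, sub_eq_zero, coeff_seriesProd_eq hf (N := n+1) (by omega)]

lemma seriesProd_pow {f : ℕ → PowerSeries ℤ}
    (hf : ∀ k, (X : PowerSeries ℤ) ^ (k+1) ∣ f k - 1) (t : ℕ) :
    seriesProd (fun k => f k ^ t) = (seriesProd f) ^ t := by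
  ext n
  have h1 : coeff n (seriesProd fun k => f k ^ t)
      = coeff n ((∏ k ∈ range (n+1), f k) ^ t) := by
    simp [seriesProd, Finset.prod_pow]
  rw [h1]
  refine (coeff_eq_of_dvd ?_).symm
  exact dvd_trans (seriesProd_sub_dvd hf n) (sub_dvd_pow_sub_pow _ _ t)




noncomputable abbrev inv1 (f : PowerSeries ℤ) : PowerSeries ℤ := PowerSeries.invOfUnit f 1

lemma mul_inv1 {f : PowerSeries ℤ} (h : constantCoeff f = 1) : f * inv1 f = 1 :=
  PowerSeries.mul_invOfUnit f 1 (by simpa using h)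

lemma ne_zero_of_cc {f : PowerSeries ℤ} (h : constantCoeff f = 1) : f ≠ 0 := by
  intro h0; rw [h0] at h; simp at h

lemma cc_one_sub_X_pow {s : ℕ} (hs : s ≠ 0) :
    constantCoeff (1 - (X : PowerSeries ℤ) ^ s) = 1 := by
  simp [map_sub, map_pow, PowerSeries.constantCoeff_X, zero_pow hs]

/-- `G m = ∏_{i<m} (1 - X^{2(i+1)})`. -/
noncomputable def G (m : ℕ) : PowerSeries ℤ := ∏ i ∈ range m, (1 - (X : PowerSeries ℤ) ^ (2 * (i + 1)))

lemma G_zero : G 0 = 1 := by simp [G]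

lemma G_succ (m : ℕ) : G (m + 1) = G m * (1 - (X : PowerSeries ℤ) ^ (2 * m + 2)) := by
  rw [G, Finset.prod_range_succ, show 2*(m+1) = 2*m+2 by ring, ← G]

lemma cc_G (m : ℕ) : constantCoeff (G m) = 1 := by
  rw [G, map_prod]
  refine Finset.prod_eq_one fun i _ => cc_one_sub_X_pow (by omega)

lemma G_ne_zero (m : ℕ) : G m ≠ 0 := ne_zero_of_cc (cc_G m)

lemma G_mul_inv (m : ℕ) : G m * inv1 (G m) = 1 := mul_inv1 (cc_G m)

lemma inv1_one : inv1 (1 : PowerSeries ℤ) = 1 := by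
  have := mul_inv1 (f := (1 : PowerSeries ℤ)) (by simp)
  simpa using this

/-- `gb2 r t` = Gaussian binomial `binom(r+t, r)` in the variable `X²`, as a power series. -/
noncomputable def gb2 (r t : ℕ) : PowerSeries ℤ := G (r + t) * inv1 (G r) * inv1 (G t)


lemma G_def (m : ℕ) : G m = ∏ i ∈ range m, (1 - (X : PowerSeries ℤ) ^ (2 * (i + 1))) := rfl

lemma gb2_def (r t : ℕ) : gb2 r t = G (r + t) * inv1 (G r) * inv1 (G t) := rfl

lemma gb2_comm (r t : ℕ) : gb2 r t = gb2 t r := by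
  rw [gb2, gb2, add_comm r t]; ring

lemma gb2_zero_right (r : ℕ) : gb2 r 0 = 1 := by
  rw [gb2, G_zero, inv1_one, mul_one]; exact G_mul_inv r

lemma gb2_zero_left (t : ℕ) : gb2 0 t = 1 := by rw [gb2_comm]; exact gb2_zero_right t

lemma gb2_mul (r t : ℕ) : gb2 r t * (G r * G t) = G (r + t) := by
  have h1 := G_mul_inv r; have h2 := G_mul_inv t
  rw [gb2]
  linear_combination (G (r + t) * inv1 (G t) * G t) * h1 + G (r + t) * h2

/-- q-Pascal, form 1: `binom(m+1, s+1) = binom(m, s+1) + Q^{a+1} binom(m, s)`, `m = s+a+1`. -/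
lemma pascal1 (s a : ℕ) :
    gb2 (s + 1) (a + 1) = gb2 (s + 1) a + (X : PowerSeries ℤ) ^ (2 * a + 2) * gb2 s (a + 1) := by
  have hD : G (s + 1) * G (a + 1) ≠ 0 := mul_ne_zero (G_ne_zero _) (G_ne_zero _)
  apply mul_right_cancel₀ hD
  rw [add_mul, gb2_mul]
  have e1 : gb2 (s + 1) a * (G (s + 1) * G (a + 1)) = G (s + a + 1) * (1 - X ^ (2 * a + 2)) := by
    have h := gb2_mul (s + 1) a
    calc gb2 (s + 1) a * (G (s + 1) * G (a + 1))
        = (gb2 (s + 1) a * (G (s + 1) * G a)) * (1 - X ^ (2 * a + 2)) := by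
          rw [G_succ a]; ring
      _ = G (s + 1 + a) * (1 - X ^ (2 * a + 2)) := by rw [h]
      _ = G (s + a + 1) * (1 - X ^ (2 * a + 2)) := by rw [show s + 1 + a = s + a + 1 by omega]
  have e2 : (X : PowerSeries ℤ) ^ (2 * a + 2) * gb2 s (a + 1) * (G (s + 1) * G (a + 1))
      = X ^ (2 * a + 2) * (G (s + a + 1) * (1 - X ^ (2 * s + 2))) := by
    have h := gb2_mul s (a + 1)
    calc (X : PowerSeries ℤ) ^ (2 * a + 2) * gb2 s (a + 1) * (G (s + 1) * G (a + 1))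
        = X ^ (2 * a + 2) * ((gb2 s (a + 1) * (G s * G (a + 1))) * (1 - X ^ (2 * s + 2))) := by
          rw [G_succ s]; ring
      _ = X ^ (2 * a + 2) * (G (s + (a + 1)) * (1 - X ^ (2 * s + 2))) := by rw [h]
      _ = X ^ (2 * a + 2) * (G (s + a + 1) * (1 - X ^ (2 * s + 2))) := by
          rw [show s + (a + 1) = s + a + 1 by omega]
  rw [e1, e2, show s + 1 + (a + 1) = (s + a + 1) + 1 by omega, G_succ]
  ring


-- placeholders from previous sections

lemma pascal2 (s a : ℕ) :
    gb2 (s + 1) (a + 1) = gb2 s (a + 1) + (X : PowerSeries ℤ) ^ (2 * s + 2) * gb2 (s + 1) a := by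
  rw [gb2_comm (s + 1) (a + 1), pascal1 a s, gb2_comm (a + 1) s, gb2_comm a (s + 1)]

lemma recurNat (p q : ℕ) :
    gb2 (p + 2) (q + 2)
      = (1 + (X : PowerSeries ℤ) ^ (2 * p + 2 * q + 6)) * gb2 (p + 1) (q + 1)
        + X ^ (2 * q + 4) * gb2 p (q + 2) + X ^ (2 * p + 4) * gb2 (p + 2) q := by
  rw [pascal2 (p + 1) (q + 1), pascal1 p (q + 1), pascal1 (p + 1) q]
  ring

lemma recur_edge (m : ℕ) :
    gb2 (2 * m + 3) 1
      = 1 + (X : PowerSeries ℤ) ^ (4 * m + 6) + X ^ 2 * gb2 (2 * m + 1) 1 := by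
  have h1 := pascal1 (2 * m + 2) 0
  have h2 := pascal2 (2 * m + 1) 0
  rw [show 2*m+3 = (2*m+2)+1 by omega] at *
  rw [show (0:ℕ)+1 = 1 by rfl] at h1 h2
  rw [h1, gb2_zero_right, show 2*m+2 = (2*m+1)+1 by omega, h2, gb2_zero_right,
    show 2*(2*m+1)+2 = 4*m+4 by ring]
  ring

lemma recur_edge0 : gb2 1 1 = 1 + (X : PowerSeries ℤ) ^ 2 := by
  have h := pascal1 0 0
  norm_num at h
  rw [h, gb2_zero_right, gb2_zero_left]
  ring

/-- `Bz n j = binom(2n, n+j)` in `X²`, extended by `0` out of range. -/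
noncomputable def Bz (n : ℕ) (j : ℤ) : PowerSeries ℤ :=
  if j.natAbs ≤ n then gb2 ((n : ℤ) + j).toNat ((n : ℤ) - j).toNat else 0

lemma Bz_eq {n : ℕ} {j : ℤ} (h : j.natAbs ≤ n) :
    Bz n j = gb2 ((n : ℤ) + j).toNat ((n : ℤ) - j).toNat := if_pos h

lemma Bz_of_gt {n : ℕ} {j : ℤ} (h : n < j.natAbs) : Bz n j = 0 := by
  rw [Bz, if_neg]; omega

lemma Bz_symm (n : ℕ) (j : ℤ) : Bz n (-j) = Bz n j := by
  simp only [Bz, Int.natAbs_neg]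
  rw [show (n:ℤ) + -j = (n:ℤ) - j by ring, show (n:ℤ) - -j = (n:ℤ) + j by ring,
    gb2_comm]

lemma Bz_recur_nonneg (n : ℕ) (j : ℤ) (hj : 0 ≤ j) :
    Bz (n + 1) j = (1 + (X : PowerSeries ℤ) ^ (2 * (2 * n + 1))) * Bz n j
      + X ^ ((((n : ℤ) + 1 - j).toNat) * 2) * Bz n (j - 1)
      + X ^ ((((n : ℤ) + 1 + j).toNat) * 2) * Bz n (j + 1) := by
  rcases lt_or_ge j.natAbs n with hlt | hge
  · -- main case |j| ≤ n - 1
    set J := j.toNat with hJ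
    obtain ⟨c, hc⟩ : ∃ c, n = J + 1 + c := ⟨n - J - 1, by omega⟩
    rw [Bz_eq (by omega), Bz_eq (by omega), Bz_eq (by omega), Bz_eq (by omega)]
    push_cast
    rw [show (((n:ℕ):ℤ) + 1 + j).toNat = 2*J + c + 2 by omega,
        show (((n:ℕ):ℤ) + 1 - j).toNat = c + 2 by omega,
        show (((n:ℕ):ℤ) + j).toNat = 2*J + c + 1 by omega,
        show (((n:ℕ):ℤ) - j).toNat = c + 1 by omega,
        show (((n:ℕ):ℤ) + (j - 1)).toNat = 2*J + c by omega,
        show (((n:ℕ):ℤ) - (j - 1)).toNat = c + 2 by omega,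
        show (((n:ℕ):ℤ) + (j + 1)).toNat = 2*J + c + 2 by omega,
        show (((n:ℕ):ℤ) - (j + 1)).toNat = c by omega]
    rw [recurNat (2*J + c) c,
        show 2*(2*n+1) = 2*(2*J+c) + 2*c + 6 by omega,
        show (c+2)*2 = 2*c+4 by ring, show (2*J+c+2)*2 = 2*(2*J+c)+4 by ring]
    try ring
  · rcases eq_or_lt_of_le hge with heq | hgt
    · -- j = n
      have hjn : j = (n : ℤ) := by omega
      subst hjn
      rcases Nat.eq_zero_or_pos n with h0 | hpos
      · subst h0
        rw [Bz_eq (by omega), Bz_eq (by omega), Bz_of_gt (by omega), Bz_of_gt (by omega)]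
        norm_num
        rw [recur_edge0, gb2_zero_right]
        ring
      · obtain ⟨m, hm⟩ : ∃ m, n = m + 1 := ⟨n - 1, by omega⟩
        subst hm
        rw [Bz_eq (by omega), Bz_eq (by omega), Bz_eq (by omega), Bz_of_gt (by omega)]
        push_cast
        rw [show ((m:ℤ) + 1 + 1 + ((m:ℤ) + 1)).toNat = 2*m+3 by omega,
            show ((m:ℤ) + 1 + 1 - ((m:ℤ) + 1)).toNat = 1 by omega,
            show ((m:ℤ) + 1 + ((m:ℤ) + 1)).toNat = 2*m+2 by omega,
            show ((m:ℤ) + 1 - ((m:ℤ) + 1)).toNat = 0 by omega,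
            show ((m:ℤ) + 1 + ((m:ℤ) + 1 - 1)).toNat = 2*m+1 by omega,
            show ((m:ℤ) + 1 - ((m:ℤ) + 1 - 1)).toNat = 1 by omega]
        rw [recur_edge m, gb2_zero_right,
            show 2*(2*(m+1)+1) = 4*m+6 by ring]
        ring
    · -- j ≥ n + 1
      rcases eq_or_lt_of_le (show (n:ℤ) + 1 ≤ j by omega) with heq | hgt2
      · -- j = n+1
        have hjn : j = (n : ℤ) + 1 := heq.symm
        subst hjn
        rw [Bz_eq (by omega), Bz_of_gt (by omega),
            show (n:ℤ) + 1 - 1 = (n:ℤ) by ring, Bz_eq (by omega), Bz_of_gt (by omega)]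
        push_cast
        rw [show ((n:ℤ) + 1 + ((n:ℤ)+1)).toNat = 2*n+2 by omega,
            show ((n:ℤ) + 1 - ((n:ℤ)+1)).toNat = 0 by omega,
            show ((n:ℤ) + (n:ℤ)).toNat = 2*n by omega,
            show ((n:ℤ) - (n:ℤ)).toNat = 0 by omega]
        rw [gb2_zero_right, gb2_zero_right]
        ring
      · -- j ≥ n+2 : all zero
        rw [Bz_of_gt (by omega), Bz_of_gt (by omega), Bz_of_gt (by omega),
            Bz_of_gt (by omega)]
        ring

lemma Bz_recur (n : ℕ) (j : ℤ) :
    Bz (n + 1) j = (1 + (X : PowerSeries ℤ) ^ (2 * (2 * n + 1))) * Bz n j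
      + X ^ ((((n : ℤ) + 1 - j).toNat) * 2) * Bz n (j - 1)
      + X ^ ((((n : ℤ) + 1 + j).toNat) * 2) * Bz n (j + 1) := by
  rcases le_or_gt 0 j with hj | hj
  · exact Bz_recur_nonneg n j hj
  · have h := Bz_recur_nonneg n (-j) (by omega)
    rw [Bz_symm, Bz_symm] at h
    rw [show -j - 1 = -(j+1) by ring, show -j + 1 = -(j-1) by ring, Bz_symm, Bz_symm] at h
    rw [h, show ((n:ℤ) + 1 - -j) = ((n:ℤ) + 1 + j) by ring,
        show ((n:ℤ) + 1 + -j) = ((n:ℤ) + 1 - j) by ring]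
    ring



lemma neg_one_pow_congr {a b : ℕ} (h : a % 2 = b % 2) :
    ((-1 : PowerSeries ℤ)) ^ a = (-1) ^ b := by
  rcases Nat.even_or_odd a with ha | ha
  · have ha' := Nat.even_iff.mp ha
    rw [ha.neg_one_pow, (Nat.even_iff.mpr (by omega : b % 2 = 0)).neg_one_pow]
  · have ha' := Nat.odd_iff.mp ha
    rw [ha.neg_one_pow, (Nat.odd_iff.mpr (by omega : b % 2 = 1)).neg_one_pow]

noncomputable def cj (j : ℤ) : PowerSeries ℤ :=
  (-1) ^ j.natAbs * X ^ (j.natAbs ^ 2)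

lemma cj_succ (i : ℤ) (n : ℕ) (hi : i ∈ Finset.Icc (-(n:ℤ)) n) :
    cj (i + 1) * (X : PowerSeries ℤ) ^ ((((n : ℤ) + 1 - (i+1)).toNat) * 2)
      = -(X ^ (2 * n + 1) * cj i) := by
  rw [Finset.mem_Icc] at hi
  have hs : ((i+1).natAbs) = i.natAbs + 1 ∨ (i+1).natAbs + 1 = i.natAbs := by omega
  have hsgn : ((-1 : PowerSeries ℤ)) ^ (i+1).natAbs = -(-1) ^ i.natAbs := by
    have : (-1 : PowerSeries ℤ) ^ (i.natAbs + 1) = -(-1)^ i.natAbs := by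
      rw [pow_succ]; ring
    rcases hs with h | h
    · rw [h, this]
    · rw [neg_one_pow_congr (show (i+1).natAbs % 2 = (i.natAbs + 1) % 2 by omega), this]
  have hexp : (i+1).natAbs ^ 2 + (((n : ℤ) + 1 - (i+1)).toNat) * 2 = i.natAbs ^ 2 + (2*n+1) := by
    have h1 : (0:ℤ) ≤ (n : ℤ) + 1 - (i+1) := by omega
    apply @Nat.cast_injective ℤ _ _
    push_cast [Int.natCast_natAbs, Int.toNat_of_nonneg h1]
    rw [sq_abs, sq_abs]; ring
  rw [cj, cj, mul_assoc, ← pow_add, hexp, hsgn, pow_add]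
  ring

lemma cj_pred (i : ℤ) (n : ℕ) (hi : i ∈ Finset.Icc (-(n:ℤ)) n) :
    cj (i - 1) * (X : PowerSeries ℤ) ^ ((((n : ℤ) + 1 + (i-1)).toNat) * 2)
      = -(X ^ (2 * n + 1) * cj i) := by
  rw [Finset.mem_Icc] at hi
  have hsgn : ((-1 : PowerSeries ℤ)) ^ (i-1).natAbs = -(-1) ^ i.natAbs := by
    have : (-1 : PowerSeries ℤ) ^ (i.natAbs + 1) = -(-1)^ i.natAbs := by
      rw [pow_succ]; ring
    rw [neg_one_pow_congr (show (i-1).natAbs % 2 = (i.natAbs + 1) % 2 by omega), this]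
  have hexp : (i-1).natAbs ^ 2 + (((n : ℤ) + 1 + (i-1)).toNat) * 2 = i.natAbs ^ 2 + (2*n+1) := by
    have h1 : (0:ℤ) ≤ (n : ℤ) + 1 + (i-1) := by omega
    apply @Nat.cast_injective ℤ _ _
    push_cast [Int.natCast_natAbs, Int.toNat_of_nonneg h1]
    rw [sq_abs, sq_abs]; ring
  rw [cj, cj, mul_assoc, ← pow_add, hexp, hsgn, pow_add]
  ring

noncomputable def Sth (n : ℕ) : PowerSeries ℤ :=
  ∑ j ∈ Finset.Icc (-(n:ℤ)) n, cj j * Bz n j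

lemma Sth_succ (n : ℕ) :
    Sth (n + 1) = (1 - (X : PowerSeries ℤ) ^ (2 * n + 1)) ^ 2 * Sth n := by
  have hsub : Finset.Icc (-(n:ℤ)) n ⊆ Finset.Icc (-(n:ℤ)-1) (n+1) := by
    intro x hx; rw [Finset.mem_Icc] at *; omega
  -- expand Sth (n+1) over the big interval with the recurrence
  have step1 : Sth (n + 1)
      = ∑ j ∈ Finset.Icc (-(n:ℤ)-1) (n+1),
          ((1 + (X : PowerSeries ℤ) ^ (2 * (2 * n + 1))) * (cj j * Bz n j)
            + cj j * (X ^ ((((n : ℤ) + 1 - j).toNat) * 2) * Bz n (j - 1))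
            + cj j * (X ^ ((((n : ℤ) + 1 + j).toNat) * 2) * Bz n (j + 1))) := by
    rw [Sth]
    rw [show (-(((n:ℕ)+1 : ℕ)):ℤ) = -(n:ℤ)-1 by push_cast; ring,
        show ((((n:ℕ)+1 : ℕ)):ℤ) = (n:ℤ)+1 by push_cast; ring]
    refine Finset.sum_congr rfl fun j hj => ?_
    rw [Bz_recur n j]; ring
  rw [step1]
  rw [Finset.sum_add_distrib, Finset.sum_add_distrib]
  -- first sum
  have e1 : ∑ j ∈ Finset.Icc (-(n:ℤ)-1) (n+1),
      (1 + (X : PowerSeries ℤ) ^ (2 * (2 * n + 1))) * (cj j * Bz n j)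
      = (1 + (X : PowerSeries ℤ) ^ (2 * (2 * n + 1))) * Sth n := by
    rw [Sth, ← Finset.sum_subset hsub, Finset.mul_sum]
    intro x hx hnx
    rw [Finset.mem_Icc] at hx hnx
    rw [Bz_of_gt (by omega)]
    ring
  -- second sum : j ↦ j - 1
  have e2 : ∑ j ∈ Finset.Icc (-(n:ℤ)-1) (n+1),
      cj j * ((X : PowerSeries ℤ) ^ ((((n : ℤ) + 1 - j).toNat) * 2) * Bz n (j - 1))
      = -((X : PowerSeries ℤ) ^ (2 * n + 1)) * Sth n := by
    have hsub2 : Finset.Icc (-(n:ℤ)+1) (n+1) ⊆ Finset.Icc (-(n:ℤ)-1) (n+1) := by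
      intro x hx; rw [Finset.mem_Icc] at *; omega
    rw [← Finset.sum_subset hsub2 ?hzero]
    case hzero =>
      intro x hx hnx
      rw [Finset.mem_Icc] at hx hnx
      rw [Bz_of_gt (by omega)]
      ring
    rw [Sth, Finset.mul_sum]
    refine Finset.sum_bij' (fun j _ => j - 1) (fun i _ => i + 1) ?_ ?_ ?_ ?_ ?_
    · intro a ha
      have ha' := Finset.mem_Icc.mp ha
      simp only [Finset.mem_Icc]
      omega
    · intro a ha
      have ha' := Finset.mem_Icc.mp ha
      simp only [Finset.mem_Icc]
      omega
    · intro a _; ring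
    · intro a _; ring
    · intro a ha
      have ha' : a - 1 ∈ Finset.Icc (-(n:ℤ)) n := by rw [Finset.mem_Icc] at *; omega
      have := cj_succ (a - 1) n ha'
      rw [show a - 1 + 1 = a by ring] at this
      calc cj a * ((X : PowerSeries ℤ) ^ ((((n : ℤ) + 1 - a).toNat) * 2) * Bz n (a - 1))
          = (cj a * X ^ ((((n : ℤ) + 1 - a).toNat) * 2)) * Bz n (a-1) := by ring
        _ = (-(X ^ (2 * n + 1) * cj (a-1))) * Bz n (a-1) := by rw [this]
        _ = -X ^ (2*n+1) * (cj (a-1) * Bz n (a-1)) := by ring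
  -- third sum : j ↦ j + 1
  have e3 : ∑ j ∈ Finset.Icc (-(n:ℤ)-1) (n+1),
      cj j * ((X : PowerSeries ℤ) ^ ((((n : ℤ) + 1 + j).toNat) * 2) * Bz n (j + 1))
      = -((X : PowerSeries ℤ) ^ (2 * n + 1)) * Sth n := by
    have hsub3 : Finset.Icc (-(n:ℤ)-1) (n-1) ⊆ Finset.Icc (-(n:ℤ)-1) (n+1) := by
      intro x hx; rw [Finset.mem_Icc] at *; omega
    rw [← Finset.sum_subset hsub3 ?hzero3]
    case hzero3 =>
      intro x hx hnx
      rw [Finset.mem_Icc] at hx hnx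
      rw [Bz_of_gt (by omega)]
      ring
    rw [Sth, Finset.mul_sum]
    refine Finset.sum_bij' (fun j _ => j + 1) (fun i _ => i - 1) ?_ ?_ ?_ ?_ ?_
    · intro a ha
      have ha' := Finset.mem_Icc.mp ha
      simp only [Finset.mem_Icc]
      omega
    · intro a ha
      have ha' := Finset.mem_Icc.mp ha
      simp only [Finset.mem_Icc]
      omega
    · intro a _; ring
    · intro a _; ring
    · intro a ha
      have ha' : a + 1 ∈ Finset.Icc (-(n:ℤ)) n := by rw [Finset.mem_Icc] at *; omega
      have := cj_pred (a + 1) n ha'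
      rw [show a + 1 - 1 = a by ring] at this
      calc cj a * ((X : PowerSeries ℤ) ^ ((((n : ℤ) + 1 + a).toNat) * 2) * Bz n (a + 1))
          = (cj a * X ^ ((((n : ℤ) + 1 + a).toNat) * 2)) * Bz n (a+1) := by ring
        _ = (-(X ^ (2 * n + 1) * cj (a+1))) * Bz n (a+1) := by rw [this]
        _ = -X ^ (2*n+1) * (cj (a+1) * Bz n (a+1)) := by ring
  rw [e1, e2, e3]
  ring



/-- `Oprod m = ∏_{i<m} (1 - X^{2i+1})`. -/
noncomputable def Oprod (m : ℕ) : PowerSeries ℤ :=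
  ∏ i ∈ range m, (1 - (X : PowerSeries ℤ) ^ (2 * i + 1))

/-- `Pprod m = ∏_{i<m} (1 - X^{i+1})`. -/
noncomputable def Pprod (m : ℕ) : PowerSeries ℤ :=
  ∏ i ∈ range m, (1 - (X : PowerSeries ℤ) ^ (i + 1))

lemma Oprod_succ (m : ℕ) : Oprod (m+1) = Oprod m * (1 - (X : PowerSeries ℤ)^(2*m+1)) :=
  Finset.prod_range_succ _ m

lemma Pprod_succ (m : ℕ) : Pprod (m+1) = Pprod m * (1 - (X : PowerSeries ℤ)^(m+1)) :=
  Finset.prod_range_succ _ m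

theorem jtp (n : ℕ) : Oprod n ^ 2 = Sth n := by
  induction n with
  | zero =>
    rw [Sth, show (-(0:ℕ):ℤ) = 0 by norm_num, show ((0:ℕ):ℤ) = 0 by norm_num,
      Finset.Icc_self, Finset.sum_singleton]
    rw [Oprod, cj, Bz]
    norm_num
    rw [gb2_zero_left]
  | succ n ih =>
    rw [Oprod_succ, mul_pow, ih, Sth_succ]
    ring

lemma Pprod_even (m : ℕ) : Pprod (2 * m) = Oprod m * G m := by
  induction m with
  | zero => rw [Pprod, Oprod, G_zero]; norm_num
  | succ m ih =>
    rw [show 2 * (m+1) = (2*m+1)+1 by ring, Pprod_succ, Pprod_succ, ih, Oprod_succ, G_succ]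
    ring

lemma G_sub_G (b c : ℕ) : (X : PowerSeries ℤ) ^ (2*b+2) ∣ G (b + c) - G b := by
  rw [G_def (b + c), G_def b, ← Finset.prod_range_mul_prod_Ico _ (Nat.le_add_right b c)]
  have e : (∏ i ∈ range b, (1 - (X:PowerSeries ℤ) ^ (2*(i+1)))) * (∏ i ∈ Ico b (b+c), (1 - (X:PowerSeries ℤ)^(2*(i+1))))
      - ∏ i ∈ range b, (1 - (X:PowerSeries ℤ)^(2*(i+1)))
      = (∏ i ∈ range b, (1 - (X:PowerSeries ℤ)^(2*(i+1)))) * ((∏ i ∈ Ico b (b+c), (1 - (X:PowerSeries ℤ)^(2*(i+1)))) - 1) := by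
    ring
  rw [e]
  refine Dvd.dvd.mul_left ?_ _
  refine dvd_prod_sub_one fun i hi => ?_
  have hb : b ≤ i := (Finset.mem_Ico.mp hi).1
  have : (1 - (X:PowerSeries ℤ)^(2*(i+1))) - 1 = -(X^(2*(i+1))) := by ring
  rw [this]
  exact dvd_neg.mpr (pow_dvd_pow X (by omega))

lemma gb_close (q a : ℕ) :
    (X : PowerSeries ℤ)^(2*q+2) ∣ gb2 (q + 2*a) q * G (q + a)^2 - G (q + a) := by
  set p := q + 2*a with hp
  set n := q + a with hn
  have hbig : (X : PowerSeries ℤ)^(2*q+2) ∣ G n^2 * G (p + q) - G n * (G p * G q) := by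
    have h1 : (X : PowerSeries ℤ)^(2*p+2) ∣ G (p + q) - G p := G_sub_G p q
    have h2 : (X : PowerSeries ℤ)^(2*q+2) ∣ G n - G q := by
      rw [hn, add_comm q a]
      have := G_sub_G q a
      rwa [add_comm q a] at this
    have e : G n^2 * G (p + q) - G n * (G p * G q)
        = G n^2 * (G (p + q) - G p) + (G n * G p) * (G n - G q) := by ring
    rw [e]
    exact dvd_add (Dvd.dvd.mul_left (dvd_trans (pow_dvd_pow X (by omega)) h1) _)
      (Dvd.dvd.mul_left h2 _)
  have key : gb2 p q * G n^2 - G n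
      = (inv1 (G p) * inv1 (G q)) * (G n^2 * G (p+q) - G n * (G p * G q)) := by
    have h1 := G_mul_inv p
    have h2 := G_mul_inv q
    rw [gb2_def]
    linear_combination (G n * inv1 (G q) * G q) * h1 + G n * h2
  rw [key]
  exact Dvd.dvd.mul_left hbig _

lemma two_mul_le_sq_add_one (a : ℕ) : 2*a ≤ a^2 + 1 := by
  have h : (2*a : ℤ) ≤ (a:ℤ)^2 + 1 := by nlinarith [sq_nonneg ((a:ℤ) - 1)]
  exact_mod_cast h

lemma Bz_close (n : ℕ) (j : ℤ) (hj : j.natAbs ≤ n) :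
    (X : PowerSeries ℤ)^(2*n+1) ∣ X^(j.natAbs^2) * (Bz n j * G n^2 - G n) := by
  set a := j.natAbs with ha
  obtain ⟨q, hq⟩ : ∃ q, n = q + a := ⟨n - a, by omega⟩
  have hBz : Bz n j = gb2 (q + 2*a) q := by
    rcases le_or_gt 0 j with h | h
    · rw [Bz, if_pos hj]
      rw [show ((n:ℤ) + j).toNat = q + 2*a by omega, show ((n:ℤ) - j).toNat = q by omega]
    · rw [Bz, if_pos hj, gb2_comm]
      rw [show ((n:ℤ) + j).toNat = q by omega, show ((n:ℤ) - j).toNat = q + 2*a by omega]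
  rw [hBz, hq]
  have h1 := gb_close q a
  have h2 : (X : PowerSeries ℤ)^(a^2) * X^(2*q+2) ∣
      X^(a^2) * (gb2 (q + 2*a) q * G (q + a)^2 - G (q + a)) := mul_dvd_mul_left _ h1
  rw [← pow_add] at h2
  refine dvd_trans (pow_dvd_pow X ?_) h2
  have := two_mul_le_sq_add_one a
  omega

noncomputable def Theta (n : ℕ) : PowerSeries ℤ := ∑ j ∈ Finset.Icc (-(n:ℤ)) n, cj j

lemma Sth_G_close (n : ℕ) :
    (X : PowerSeries ℤ)^(2*n+1) ∣ Sth n * G n^2 - Theta n * G n := by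
  rw [Sth, Theta, Finset.sum_mul, Finset.sum_mul, ← Finset.sum_sub_distrib]
  refine Finset.dvd_sum fun j hj => ?_
  have hj' : j.natAbs ≤ n := by
    have := Finset.mem_Icc.mp hj; omega
  have hterm : cj j * Bz n j * G n^2 - cj j * G n
      = (-1 : PowerSeries ℤ)^(j.natAbs) * (X^(j.natAbs^2) * (Bz n j * G n^2 - G n)) := by
    rw [cj]; ring
  rw [hterm]
  exact Dvd.dvd.mul_left (Bz_close n j hj') _





lemma int_neg_one_pow_congr {a b : ℕ} (h : a % 2 = b % 2) : ((-1 : ℤ)) ^ a = (-1) ^ b := by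
  rcases Nat.even_or_odd a with ha | ha
  · have ha' := Nat.even_iff.mp ha
    rw [ha.neg_one_pow, (Nat.even_iff.mpr (by omega : b % 2 = 0)).neg_one_pow]
  · have ha' := Nat.odd_iff.mp ha
    rw [ha.neg_one_pow, (Nat.odd_iff.mpr (by omega : b % 2 = 1)).neg_one_pow]

lemma neg_one_pow_C (a : ℕ) : ((-1 : PowerSeries ℤ)) ^ a = C ((-1) ^ a) := by
  rw [map_pow, map_neg, map_one]

lemma coeff_cj (t : ℕ) (j : ℤ) :
    coeff t (cj j) = if j.natAbs ^ 2 = t then ((-1 : ℤ)) ^ j.natAbs else 0 := by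
  rw [cj, neg_one_pow_C, coeff_C_mul, coeff_X_pow]
  by_cases h : j.natAbs ^ 2 = t
  · rw [if_pos h, if_pos h.symm, mul_one]
  · rw [if_neg h, if_neg fun hh => h hh.symm, mul_zero]

lemma nat_sq_inj {a k : ℕ} (h : a ^ 2 = k ^ 2) : a = k := by
  rcases Nat.lt_trichotomy a k with hl | he | hg
  · exfalso; have := Nat.pow_lt_pow_left hl (two_ne_zero); omega
  · exact he
  · exfalso; have := Nat.pow_lt_pow_left hg (two_ne_zero); omega

lemma sq_mod_two (k : ℕ) : k ^ 2 % 2 = k % 2 := by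
  rw [pow_two]
  rcases Nat.even_or_odd k with h | h
  · have h1 := Nat.even_iff.mp h
    have h2 := Nat.even_iff.mp (h.mul_right k)
    omega
  · have h1 := Nat.odd_iff.mp h
    have h2 := Nat.odd_iff.mp (h.mul h)
    omega

lemma coeff_theta (t : ℕ) (n : ℕ) (h : t < n) :
    coeff t (Theta n) = coeff t phiNeg := by
  rw [Theta, map_sum]
  rw [show (coeff t) phiNeg
      = (if t = 0 then 1 else if ∃ k : ℕ, 0 < k ∧ t = k ^ 2 then 2 * (-1) ^ t else 0) from by
    rw [phiNeg, coeff_mk]]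
  by_cases ht0 : t = 0
  · subst ht0
    rw [if_pos rfl]
    rw [Finset.sum_eq_single 0]
    · rw [coeff_cj]; norm_num
    · intro j hj hne
      rw [coeff_cj, if_neg]
      intro hc
      apply hne
      have h0 : j.natAbs = 0 := by
        have := Nat.pow_eq_zero.mp hc
        tauto
      omega
    · intro h0
      exfalso
      apply h0
      rw [Finset.mem_Icc]
      omega
  · by_cases hsq : ∃ k : ℕ, 0 < k ∧ t = k ^ 2
    · obtain ⟨k, hk0, hkt⟩ := hsq
      rw [if_neg ht0, if_pos ⟨k, hk0, hkt⟩]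
      have hkle : k ≤ t := by
        have := Nat.le_self_pow (two_ne_zero) k
        omega
      have hkn : (k : ℤ) ≤ n := by exact_mod_cast Nat.cast_le.mpr (by omega : k ≤ n)
      have hss : ({(k : ℤ), -(k : ℤ)} : Finset ℤ) ⊆ Finset.Icc (-(n:ℤ)) n := by
        intro x hx
        rw [Finset.mem_insert, Finset.mem_singleton] at hx
        rw [Finset.mem_Icc]
        rcases hx with rfl | rfl <;> constructor <;> omega
      rw [← Finset.sum_subset hss]
      · have hkne : (k : ℤ) ≠ -(k : ℤ) := by omega
        rw [Finset.sum_insert (by simpa using hkne), Finset.sum_singleton,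
          coeff_cj, coeff_cj, Int.natAbs_neg]
        have habs : ((k:ℤ)).natAbs = k := Int.natAbs_natCast k
        rw [habs, if_pos hkt.symm]
        have : ((-1 : ℤ)) ^ k = (-1) ^ t := by
          apply int_neg_one_pow_congr
          have := sq_mod_two k
          omega
        rw [this]
        ring
      · intro x hx hnx
        rw [coeff_cj, if_neg]
        intro hc
        apply hnx
        have : x.natAbs = k := nat_sq_inj (by omega)
        rw [Finset.mem_insert, Finset.mem_singleton]
        rcases Int.natAbs_eq x with he | he <;> omega
    · rw [if_neg ht0, if_neg hsq]
      refine Finset.sum_eq_zero fun j hj => ?_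
      rw [coeff_cj, if_neg]
      intro hc
      rcases Nat.eq_zero_or_pos j.natAbs with h0 | h0
      · rw [h0] at hc
        norm_num at hc
        exact ht0 hc.symm
      · exact hsq ⟨j.natAbs, h0, hc.symm⟩

lemma phiNeg_sub_Theta {N n : ℕ} (h : N < n) :
    (X : PowerSeries ℤ) ^ (N+1) ∣ phiNeg - Theta n := by
  rw [PowerSeries.X_pow_dvd_iff]
  intro m hm
  rw [map_sub, sub_eq_zero, ← coeff_theta m n (by omega)]

theorem gauss : phiNeg * fr 2 = fr 1 ^ 2 := by
  ext N
  set n := N + 1 with hn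
  apply coeff_eq_of_dvd (n := N)
  have hf2 : ∀ k, (X : PowerSeries ℤ)^(k+1) ∣ (1 - X^(2*(k+1))) - 1 := fun k => by
    rw [show (1 - (X : PowerSeries ℤ)^(2*(k+1))) - 1 = -(X^(2*(k+1))) by ring]
    exact dvd_neg.mpr (pow_dvd_pow _ (by omega))
  have hf1 : ∀ k, (X : PowerSeries ℤ)^(k+1) ∣ (1 - X^(k+1)) - 1 := fun k => by
    rw [show (1 - (X : PowerSeries ℤ)^(k+1)) - 1 = -(X^(k+1)) by ring]
    exact dvd_neg.mpr dvd_rfl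
  have h2 : (X : PowerSeries ℤ)^(N+1) ∣ fr 2 - G n := by
    have := seriesProd_sub_dvd hf2 N
    rw [← G_def] at this
    rw [fr]
    exact this
  have hfr1 : fr 1 = seriesProd (fun j => 1 - (X : PowerSeries ℤ)^(j+1)) := by
    have hfun : (fun j => 1 - (X : PowerSeries ℤ)^(1*(j+1))) = (fun j => 1 - (X:PowerSeries ℤ)^(j+1)) := by
      funext j; rw [one_mul]
    rw [fr, hfun]
  have h1 : (X : PowerSeries ℤ)^(N+1) ∣ fr 1 - Pprod (2*n) := by
    have ha := seriesProd_sub_dvd hf1 N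
    have hb := dvd_prod_sub_prod hf1 (le_refl (N+1)) (show N+1 ≤ 2*n by omega)
    rw [hfr1]
    have e : seriesProd (fun j => 1 - (X : PowerSeries ℤ)^(j+1)) - Pprod (2*n)
        = (seriesProd (fun j => 1 - (X : PowerSeries ℤ)^(j+1)) - ∏ k ∈ range (N+1), (1 - (X : PowerSeries ℤ)^(k+1)))
          - ((∏ k ∈ range (2*n), (1 - (X : PowerSeries ℤ)^(k+1))) - ∏ k ∈ range (N+1), (1 - (X : PowerSeries ℤ)^(k+1))) := by
      rw [Pprod]; ring
    rw [e]
    exact dvd_sub ha hb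
  have e4 : Pprod (2*n)^2 = Sth n * G n^2 := by rw [Pprod_even, mul_pow, jtp]
  have h3 : (X : PowerSeries ℤ)^(N+1) ∣ Sth n * G n^2 - Theta n * G n :=
    dvd_trans (pow_dvd_pow X (by omega)) (Sth_G_close n)
  have h4 : (X : PowerSeries ℤ)^(N+1) ∣ phiNeg - Theta n := phiNeg_sub_Theta (by omega)
  have h1' : (X : PowerSeries ℤ)^(N+1) ∣ fr 1 ^ 2 - Pprod (2*n)^2 :=
    dvd_trans h1 (sub_dvd_pow_sub_pow _ _ 2)
  have e5 : Sth n * G n^2 - Pprod (2*n)^2 = 0 := by rw [e4]; ring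
  have key : phiNeg * fr 2 - fr 1^2
      = phiNeg * (fr 2 - G n) + (phiNeg - Theta n) * G n
        - (Sth n * G n^2 - Theta n * G n) + (Sth n * G n^2 - Pprod (2*n)^2)
        - (fr 1^2 - Pprod (2*n)^2) := by ring
  rw [key, e5, add_zero]
  exact dvd_sub (dvd_sub (dvd_add (h2.mul_left _) (h4.mul_right _)) h3) h1'





/-- The single overpartition factor. -/
noncomputable def g (k : ℕ) : PowerSeries ℤ :=
  (1 - (X : PowerSeries ℤ) ^ (2 * (k + 1))) * inv1 (1 - (X : PowerSeries ℤ) ^ (k + 1)) ^ 2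

lemma hf_g : ∀ k, (X : PowerSeries ℤ) ^ (k+1) ∣ g k - 1 := by
  intro k
  set u := inv1 (1 - (X : PowerSeries ℤ) ^ (k + 1)) with hu
  have h1 : (1 - (X : PowerSeries ℤ) ^ (k+1)) * u = 1 := mul_inv1 (cc_one_sub_X_pow (by omega))
  have key : g k - 1 = X^(k+1) * (2 * (1 - (X : PowerSeries ℤ)^(k+1)) * u^2) := by
    rw [g, show (2*(k+1)) = (k+1)+(k+1) by ring, pow_add]
    linear_combination ((1 - (X : PowerSeries ℤ)^(k+1)) * u + 1) * h1
  rw [key]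
  exact Dvd.intro _ rfl

lemma overGF_eq (t : ℕ) : overGF t = seriesProd (fun k => g k ^ t) := by
  rw [overGF]
  have hfun : (fun k => (1 - (PowerSeries.X : PowerSeries ℤ) ^ (2 * (k + 1))) ^ t *
      (PowerSeries.invOfUnit (1 - (PowerSeries.X : PowerSeries ℤ) ^ (k + 1)) 1) ^ (2 * t))
      = fun k => g k ^ t := by
    funext k
    simp only [g, mul_pow, ← pow_mul]
  rw [hfun]

lemma overGF_one : overGF 1 = seriesProd g := by
  rw [overGF_eq 1]
  have hfun : (fun k => g k ^ 1) = g := by funext k; rw [pow_one]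
  rw [hfun]

lemma overGF_pow (t : ℕ) : overGF t = (overGF 1) ^ t := by
  rw [overGF_eq t, overGF_one, seriesProd_pow hf_g]

theorem phiNeg_mul_A : phiNeg * overGF 1 = 1 := by
  refine PowerSeries.ext fun N => ?_
  apply coeff_eq_of_dvd (n := N)
  set V := ∏ k ∈ range (N+1), inv1 (1 - (X : PowerSeries ℤ) ^ (k + 1)) with hV
  have hPV : Pprod (N+1) * V = 1 := by
    rw [Pprod, hV, ← Finset.prod_mul_distrib]
    rw [Finset.prod_congr rfl (fun k _ => mul_inv1 (cc_one_sub_X_pow (by omega)))]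
    exact Finset.prod_const_one
  have hQ : (∏ k ∈ range (N+1), g k) = G (N+1) * V^2 := by
    rw [G_def, hV, ← Finset.prod_pow, ← Finset.prod_mul_distrib]
    exact Finset.prod_congr rfl fun k _ => rfl
  -- finite Gauss
  have hf2 : ∀ k, (X : PowerSeries ℤ)^(k+1) ∣ (1 - X^(2*(k+1))) - 1 := fun k => by
    rw [show (1 - (X : PowerSeries ℤ)^(2*(k+1))) - 1 = -(X^(2*(k+1))) by ring]
    exact dvd_neg.mpr (pow_dvd_pow _ (by omega))
  have hf1 : ∀ k, (X : PowerSeries ℤ)^(k+1) ∣ (1 - X^(k+1)) - 1 := fun k => by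
    rw [show (1 - (X : PowerSeries ℤ)^(k+1)) - 1 = -(X^(k+1)) by ring]
    exact dvd_neg.mpr dvd_rfl
  have h2 : (X : PowerSeries ℤ)^(N+1) ∣ fr 2 - G (N+1) := by
    have := seriesProd_sub_dvd hf2 N
    rw [← G_def] at this
    rw [fr]
    exact this
  have hfr1 : fr 1 = seriesProd (fun j => 1 - (X : PowerSeries ℤ)^(j+1)) := by
    have hfun : (fun j => 1 - (X : PowerSeries ℤ)^(1*(j+1)))
        = (fun j => 1 - (X:PowerSeries ℤ)^(j+1)) := by
      funext j; rw [one_mul]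
    rw [fr, hfun]
  have h1 : (X : PowerSeries ℤ)^(N+1) ∣ fr 1 - Pprod (N+1) := by
    rw [hfr1, Pprod]
    exact seriesProd_sub_dvd hf1 N
  have h1' : (X : PowerSeries ℤ)^(N+1) ∣ fr 1 ^ 2 - Pprod (N+1)^2 :=
    dvd_trans h1 (sub_dvd_pow_sub_pow _ _ 2)
  have hGf : (X : PowerSeries ℤ)^(N+1) ∣ phiNeg * G (N+1) - Pprod (N+1)^2 := by
    have key : phiNeg * G (N+1) - Pprod (N+1)^2
        = -(phiNeg * (fr 2 - G (N+1))) + (fr 1^2 - Pprod (N+1)^2)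
          + (phiNeg * fr 2 - fr 1 ^ 2) := by ring
    rw [key, gauss, sub_self, add_zero]
    exact dvd_add (dvd_neg.mpr (h2.mul_left _)) h1'
  -- assemble
  have hA := seriesProd_sub_dvd hf_g N
  have hQ1 : (X : PowerSeries ℤ)^(N+1) ∣ phiNeg * (∏ k ∈ range (N+1), g k) - 1 := by
    rw [hQ]
    have e : phiNeg * (G (N+1) * V^2) - 1
        = (phiNeg * G (N+1) - Pprod (N+1)^2) * V^2 + ((Pprod (N+1) * V)^2 - 1) := by ring
    rw [e, hPV]
    norm_num
    exact hGf.mul_right _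
  have total : phiNeg * overGF 1 - 1
      = phiNeg * (seriesProd g - ∏ k ∈ range (N+1), g k)
        + (phiNeg * (∏ k ∈ range (N+1), g k) - 1) := by
    rw [overGF_one]; ring
  rw [total]
  exact dvd_add (hA.mul_left _) hQ1





/-- `φ(-q^m)`. -/
noncomputable def phiNegM (m : ℕ) : PowerSeries ℤ :=
  PowerSeries.mk fun n =>
    if n = 0 then 1
    else if ∃ k : ℕ, 0 < k ∧ n = m * k ^ 2 then 2 * (-1) ^ (Nat.sqrt (n / m)) else 0

noncomputable def sgn (w : ℤ) : ℤ := (-1) ^ w.natAbs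

lemma sgn_natCast (k : ℕ) : sgn (k : ℤ) = (-1) ^ k := by rw [sgn, Int.natAbs_natCast]

lemma sgn_neg (w : ℤ) : sgn (-w) = sgn w := by rw [sgn, sgn, Int.natAbs_neg]

lemma phiNegM_one : phiNegM 1 = phiNeg := by
  refine PowerSeries.ext fun n => ?_
  rw [phiNegM, phiNeg, coeff_mk, coeff_mk]
  by_cases h0 : n = 0
  · rw [if_pos h0, if_pos h0]
  · rw [if_neg h0, if_neg h0]
    by_cases hsq : ∃ k : ℕ, 0 < k ∧ n = k ^ 2
    · obtain ⟨k, hk, rfl⟩ := hsq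
      rw [if_pos (⟨k, hk, (one_mul (k^2)).symm⟩ : ∃ j : ℕ, 0 < j ∧ k ^ 2 = 1 * j ^ 2),
        if_pos ⟨k, hk, rfl⟩]
      rw [Nat.div_one, pow_two, Nat.sqrt_eq, ← pow_two]
      congr 1
      exact int_neg_one_pow_congr (by have := sq_mod_two k; omega)
    · rw [if_neg (by simpa using hsq), if_neg hsq]

section sums
variable {m n : ℕ}

lemma sum_w_zero (w : ℤ → ℤ) (hm : 1 ≤ m) :
    ∑ x ∈ Finset.Icc (-(n:ℤ)) n, (if (m:ℤ) * x^2 = ((0:ℕ):ℤ) then w x else 0) = w 0 := by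
  rw [Finset.sum_eq_single 0]
  · rw [if_pos (by norm_num)]
  · intro x hx hne
    rw [if_neg]
    intro hc
    norm_num at hc
    rcases hc with hc | hc
    · omega
    · exact hne hc
  · intro h0
    exact absurd (Finset.mem_Icc.mpr ⟨by omega, by omega⟩) h0

lemma sum_w_pos (w : ℤ → ℤ) (hm : 1 ≤ m) (k : ℕ) (hk : 0 < k) (hkn : k ≤ n) :
    ∑ x ∈ Finset.Icc (-(n:ℤ)) n, (if (m:ℤ) * x^2 = (m:ℤ) * (k:ℤ)^2 then w x else 0)
      = w k + w (-(k:ℤ)) := by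
  have hss : ({(k : ℤ), -(k : ℤ)} : Finset ℤ) ⊆ Finset.Icc (-(n:ℤ)) n := by
    intro x hx
    rw [Finset.mem_insert, Finset.mem_singleton] at hx
    rw [Finset.mem_Icc]
    rcases hx with rfl | rfl <;> constructor <;> push_cast <;> omega
  rw [← Finset.sum_subset hss]
  · have hkne : (k : ℤ) ≠ -(k : ℤ) := by omega
    rw [Finset.sum_insert (by simpa using hkne), Finset.sum_singleton,
      if_pos rfl, if_pos (by ring)]
  · intro x hx hnx
    rw [if_neg]
    intro hc
    apply hnx
    have hx2 : x^2 = (k:ℤ)^2 := by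
      have hm0 : (m:ℤ) ≠ 0 := by omega
      exact mul_left_cancel₀ hm0 hc
    have : (x - k) * (x + k) = 0 := by linear_combination hx2
    rw [Finset.mem_insert, Finset.mem_singleton]
    rcases mul_eq_zero.mp this with h | h
    · left; omega
    · right; omega

lemma sum_w_none (w : ℤ → ℤ) (hm : 1 ≤ m) {a : ℕ} (ha0 : a ≠ 0)
    (ha : ¬ ∃ k : ℕ, 0 < k ∧ a = m * k ^ 2) :
    ∑ x ∈ Finset.Icc (-(n:ℤ)) n, (if (m:ℤ) * x^2 = (a:ℤ) then w x else 0) = 0 := by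
  refine Finset.sum_eq_zero fun x hx => ?_
  rw [if_neg]
  intro hc
  apply ha
  refine ⟨x.natAbs, ?_, ?_⟩
  · rcases Nat.eq_zero_or_pos x.natAbs with h0 | h0
    · exfalso
      apply ha0
      have : x = 0 := by omega
      rw [this] at hc
      norm_num at hc
      omega
    · exact h0
  · have : ((m * x.natAbs ^ 2 : ℕ) : ℤ) = (a : ℤ) := by
      push_cast
      rw [sq_abs]
      exact hc
    exact_mod_cast this.symm

lemma coeff_phi (hm : 1 ≤ m) {a : ℕ} (ha : a ≤ n) :
    coeff a (phi m)
      = ∑ x ∈ Finset.Icc (-(n:ℤ)) n, (if (m:ℤ) * x^2 = (a:ℤ) then 1 else 0) := by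
  rw [phi, coeff_mk]
  by_cases h0 : a = 0
  · subst h0
    rw [if_pos rfl, sum_w_zero (fun _ => (1:ℤ)) hm]
  · rw [if_neg h0]
    by_cases hsq : ∃ k : ℕ, 0 < k ∧ a = m * k ^ 2
    · obtain ⟨k, hk, rfl⟩ := hsq
      rw [if_pos ⟨k, hk, rfl⟩]
      have hkn : k ≤ n := by
        have h1 : k ≤ k ^ 2 := Nat.le_self_pow two_ne_zero k
        have h2 : k ^ 2 ≤ m * k ^ 2 := Nat.le_mul_of_pos_left _ (by omega)
        omega
      have hcast : ((m * k ^ 2 : ℕ) : ℤ) = (m:ℤ) * (k:ℤ)^2 := by push_cast; ring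
      rw [show (fun x : ℤ => if (m:ℤ) * x^2 = ((m * k ^ 2 : ℕ) : ℤ) then (1:ℤ) else 0)
          = (fun x : ℤ => if (m:ℤ) * x^2 = (m:ℤ) * (k:ℤ)^2 then (1:ℤ) else 0) from by
        funext x; rw [hcast]]
      rw [sum_w_pos (fun _ => (1:ℤ)) hm k hk hkn]
      norm_num
    · rw [if_neg hsq, sum_w_none (fun _ => (1:ℤ)) hm h0 hsq]

lemma coeff_phiNegM (hm : 1 ≤ m) {a : ℕ} (ha : a ≤ n) :
    coeff a (phiNegM m)
      = ∑ x ∈ Finset.Icc (-(n:ℤ)) n, (if (m:ℤ) * x^2 = (a:ℤ) then sgn x else 0) := by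
  rw [phiNegM, coeff_mk]
  by_cases h0 : a = 0
  · subst h0
    rw [if_pos rfl, sum_w_zero sgn hm, sgn]
    norm_num
  · rw [if_neg h0]
    by_cases hsq : ∃ k : ℕ, 0 < k ∧ a = m * k ^ 2
    · obtain ⟨k, hk, rfl⟩ := hsq
      rw [if_pos ⟨k, hk, rfl⟩]
      have hkn : k ≤ n := by
        have h1 : k ≤ k ^ 2 := Nat.le_self_pow two_ne_zero k
        have h2 : k ^ 2 ≤ m * k ^ 2 := Nat.le_mul_of_pos_left _ (by omega)
        omega
      have hcast : ((m * k ^ 2 : ℕ) : ℤ) = (m:ℤ) * (k:ℤ)^2 := by push_cast; ring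
      rw [show (fun x : ℤ => if (m:ℤ) * x^2 = ((m * k ^ 2 : ℕ) : ℤ) then sgn x else 0)
          = (fun x : ℤ => if (m:ℤ) * x^2 = (m:ℤ) * (k:ℤ)^2 then sgn x else 0) from by
        funext x; rw [hcast]]
      rw [sum_w_pos sgn hm k hk hkn, sgn_neg, sgn_natCast]
      have hdiv : m * k ^ 2 / m = k ^ 2 := Nat.mul_div_cancel_left _ (by omega)
      rw [hdiv, pow_two, Nat.sqrt_eq]
      ring
    · rw [if_neg hsq, sum_w_none sgn hm h0 hsq]

end sums

lemma antidiag_eval (A B c : ℤ) (hA : 0 ≤ A) (hB : 0 ≤ B) (n : ℕ) :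
    ∑ p ∈ Finset.HasAntidiagonal.antidiagonal n, (if A = (p.1:ℤ) then 1 else 0) * (if B = (p.2:ℤ) then c else 0)
      = if A + B = (n:ℤ) then c else 0 := by
  by_cases h : A + B = (n:ℤ)
  · rw [if_pos h, Finset.sum_eq_single (A.toNat, B.toNat)]
    · rw [if_pos (by rw [Int.toNat_of_nonneg hA]), if_pos (by rw [Int.toNat_of_nonneg hB]), one_mul]
    · intro p hp hne
      rcases eq_or_ne A (p.1:ℤ) with h1 | h1
      · rcases eq_or_ne B (p.2:ℤ) with h2 | h2
        · exfalso; apply hne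
          have : p.1 = A.toNat := by omega
          have : p.2 = B.toNat := by omega
          ext <;> omega
        · rw [if_neg h2, mul_zero]
      · rw [if_neg h1, zero_mul]
    · intro hmem
      exfalso
      apply hmem
      rw [Finset.HasAntidiagonal.mem_antidiagonal]
      omega
  · rw [if_neg h]
    refine Finset.sum_eq_zero fun p hp => ?_
    have hpn := Finset.HasAntidiagonal.mem_antidiagonal.mp hp
    rcases eq_or_ne A (p.1:ℤ) with h1 | h1
    · rcases eq_or_ne B (p.2:ℤ) with h2 | h2
      · exfalso; apply h; rw [h1, h2]; exact_mod_cast congrArg (Nat.cast : ℕ → ℤ) hpn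
      · rw [if_neg h2, mul_zero]
    · rw [if_neg h1, zero_mul]

lemma conv_eval {F Gc : PowerSeries ℤ} {f g : ℤ → ℤ} {M : ℕ} (hM : 1 ≤ M) (n : ℕ)
    (hF : ∀ a : ℕ, a ≤ n → coeff a F
      = ∑ x ∈ Finset.Icc (-(n:ℤ)) n, (if (M:ℤ)*x^2 = (a:ℤ) then f x else 0))
    (hG : ∀ b : ℕ, b ≤ n → coeff b Gc
      = ∑ y ∈ Finset.Icc (-(n:ℤ)) n, (if (M:ℤ)*y^2 = (b:ℤ) then g y else 0)) :
    coeff n (F * Gc) = ∑ x ∈ Finset.Icc (-(n:ℤ)) n, ∑ y ∈ Finset.Icc (-(n:ℤ)) n,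
      (if (M:ℤ)*x^2 + (M:ℤ)*y^2 = (n:ℤ) then f x * g y else 0) := by
  rw [coeff_mul]
  rw [Finset.sum_congr rfl (fun p hp => by
    have h1 := Finset.HasAntidiagonal.mem_antidiagonal.mp hp
    rw [hF p.1 (by omega), hG p.2 (by omega), Finset.sum_mul_sum])]
  rw [Finset.sum_comm]
  refine Finset.sum_congr rfl fun x hx => ?_
  rw [Finset.sum_comm]
  refine Finset.sum_congr rfl fun y hy => ?_
  have hA : (0:ℤ) ≤ (M:ℤ)*x^2 := by positivity
  have hB : (0:ℤ) ≤ (M:ℤ)*y^2 := by positivity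
  have := antidiag_eval ((M:ℤ)*x^2) ((M:ℤ)*y^2) (f x * g y) hA hB n
  rw [← this]
  refine Finset.sum_congr rfl fun p hp => ?_
  by_cases h1 : (M:ℤ)*x^2 = (p.1:ℤ)
  · by_cases h2 : (M:ℤ)*y^2 = (p.2:ℤ)
    · rw [if_pos h1, if_pos h2, if_pos h1, if_pos h2, one_mul]
    · rw [if_pos h1, if_neg h2, if_pos h1, if_neg h2, mul_zero, mul_zero]
  · rw [if_neg h1, if_neg h1, zero_mul, zero_mul]

lemma int_bound {u : ℤ} {n : ℕ} (h : u^2 ≤ (n:ℤ)) : -(n:ℤ) ≤ u ∧ u ≤ n := by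
  constructor <;> nlinarith [sq_nonneg u, sq_nonneg (u-1), sq_nonneg (u+1)]

lemma key_sum (m n : ℕ) (hm : 1 ≤ m) :
    (∑ x ∈ Finset.Icc (-(n:ℤ)) n, ∑ y ∈ Finset.Icc (-(n:ℤ)) n,
      (if (m:ℤ)*x^2 + (m:ℤ)*y^2 = (n:ℤ) then (1:ℤ) * sgn y else 0))
    = ∑ u ∈ Finset.Icc (-(n:ℤ)) n, ∑ v ∈ Finset.Icc (-(n:ℤ)) n,
      (if ((2*m:ℕ):ℤ)*u^2 + ((2*m:ℕ):ℤ)*v^2 = (n:ℤ) then sgn u * sgn v else 0) := by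
  have hI : ∀ (h : ℤ × ℤ → ℤ) (s : Finset ℤ),
      (∑ x ∈ s, ∑ y ∈ s, h (x, y)) = ∑ z ∈ s ×ˢ s, h z := fun h s =>
    (Finset.sum_product s s h).symm
  rw [hI (fun z => if (m:ℤ)*z.1^2 + (m:ℤ)*z.2^2 = (n:ℤ) then (1:ℤ) * sgn z.2 else 0),
      hI (fun z => if ((2*m:ℕ):ℤ)*z.1^2 + ((2*m:ℕ):ℤ)*z.2^2 = (n:ℤ) then sgn z.1 * sgn z.2 else 0)]
  set S := Finset.Icc (-(n:ℤ)) n ×ˢ Finset.Icc (-(n:ℤ)) n with hS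
  -- write LHS as sum over filter of the condition
  rw [← Finset.sum_filter (fun z : ℤ × ℤ => (m:ℤ)*z.1^2 + (m:ℤ)*z.2^2 = (n:ℤ))
        (fun z => (1:ℤ) * sgn z.2),
      ← Finset.sum_filter (fun z : ℤ × ℤ => ((2*m:ℕ):ℤ)*z.1^2 + ((2*m:ℕ):ℤ)*z.2^2 = (n:ℤ))
        (fun z => sgn z.1 * sgn z.2)]
  set S1 := S.filter (fun z : ℤ × ℤ => (m:ℤ)*z.1^2 + (m:ℤ)*z.2^2 = (n:ℤ)) with hS1
  set S2 := S.filter (fun z : ℤ × ℤ => ((2*m:ℕ):ℤ)*z.1^2 + ((2*m:ℕ):ℤ)*z.2^2 = (n:ℤ)) with hS2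
  -- split S1 by parity of z.1 + z.2
  rw [← Finset.sum_filter_add_sum_filter_not S1 (fun z : ℤ × ℤ => Even (z.1 + z.2))
        (fun z => (1:ℤ) * sgn z.2)]
  have hodd : ∑ z ∈ S1.filter (fun z : ℤ × ℤ => ¬ Even (z.1 + z.2)), (1:ℤ) * sgn z.2 = 0 := by
    refine Finset.sum_involution (fun z _ => (z.2, z.1)) ?_ ?_ ?_ ?_
    · intro z hz
      simp only [Finset.mem_filter] at hz
      have hpar : ¬ Even (z.1 + z.2) := hz.2
      have : z.1.natAbs % 2 ≠ z.2.natAbs % 2 := by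
        rcases Int.even_or_odd (z.1 + z.2) with h | h
        · exact absurd h hpar
        · obtain ⟨r, hr⟩ := h; omega
      simp only [one_mul, sgn]
      rcases Nat.even_or_odd z.2.natAbs with h2 | h2
      · rw [h2.neg_one_pow, (Nat.odd_iff.mpr (by have := Nat.even_iff.mp h2; omega)).neg_one_pow]
        ring
      · rw [h2.neg_one_pow, (Nat.even_iff.mpr (by have := Nat.odd_iff.mp h2; omega)).neg_one_pow]
        ring
    · intro z hz _
      simp only [Finset.mem_filter] at hz
      intro hcon
      have h1 : z.2 = z.1 := congrArg Prod.fst hcon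
      have hpar : ¬ Even (z.1 + z.2) := hz.2
      rw [← h1] at hpar
      exact hpar ⟨z.2, rfl⟩
    · intro z hz
      simp only [Finset.mem_filter, hS1, hS, Finset.mem_product, Finset.mem_Icc] at hz ⊢
      obtain ⟨⟨⟨⟨hx1, hx2⟩, hy1, hy2⟩, hC⟩, hpar⟩ := hz
      refine ⟨⟨⟨⟨hy1, hy2⟩, hx1, hx2⟩, by linear_combination hC⟩, ?_⟩
      rw [add_comm]
      exact hpar
    · intro z hz; rfl
  rw [hodd, add_zero]
  -- even part: bijection with S2
  refine Finset.sum_nbij' (fun z : ℤ × ℤ => ((z.1 + z.2)/2, (z.1 - z.2)/2))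
    (fun w : ℤ × ℤ => (w.1 + w.2, w.1 - w.2)) ?_ ?_ ?_ ?_ ?_
  · -- maps into S2
    intro z hz
    simp only [Finset.mem_filter, hS1, hS2, hS, Finset.mem_product, Finset.mem_Icc] at hz ⊢
    obtain ⟨⟨⟨⟨hx1, hx2⟩, hy1, hy2⟩, hC⟩, hE⟩ := hz
    obtain ⟨r, hr⟩ := hE
    have hu : 2 * ((z.1 + z.2)/2) = z.1 + z.2 := by omega
    have hv' : Even (z.1 - z.2) := ⟨z.1 - r, by omega⟩
    obtain ⟨t, ht⟩ := hv'
    have hv : 2 * ((z.1 - z.2)/2) = z.1 - z.2 := by omega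
    set u := (z.1 + z.2)/2
    set v := (z.1 - z.2)/2
    have q1 : (z.1 + z.2)^2 = 4*u^2 := by rw [← hu]; ring
    have q2 : (z.1 - z.2)^2 = 4*v^2 := by rw [← hv]; ring
    have hC2 : ((2*m:ℕ):ℤ)*u^2 + ((2*m:ℕ):ℤ)*v^2 = (n:ℤ) := by
      have h4 : (4:ℤ) * (((2*m:ℕ):ℤ)*u^2 + ((2*m:ℕ):ℤ)*v^2) = 4 * (n:ℤ) := by
        push_cast
        linear_combination (-2*(m:ℤ))*q1 + (-2*(m:ℤ))*q2 + 4*hC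
      have := mul_left_cancel₀ (show (4:ℤ) ≠ 0 by norm_num) h4
      exact this
    have hub : u^2 ≤ (n:ℤ) := by
      have hmz : (1:ℤ) ≤ (m:ℤ) := by exact_mod_cast hm
      push_cast at hC2
      nlinarith [sq_nonneg v, sq_nonneg u]
    have hvb : v^2 ≤ (n:ℤ) := by
      have hmz : (1:ℤ) ≤ (m:ℤ) := by exact_mod_cast hm
      push_cast at hC2
      nlinarith [sq_nonneg v, sq_nonneg u]
    obtain ⟨hu1, hu2⟩ := int_bound hub
    obtain ⟨hv1, hv2⟩ := int_bound hvb
    exact ⟨⟨⟨hu1, hu2⟩, hv1, hv2⟩, hC2⟩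
  · -- maps back into S1 ∩ even
    intro w hw
    simp only [Finset.mem_filter, hS1, hS2, hS, Finset.mem_product, Finset.mem_Icc] at hw ⊢
    obtain ⟨⟨⟨hu1, hu2⟩, hv1, hv2⟩, hC2⟩ := hw
    have hC : (m:ℤ)*(w.1 + w.2)^2 + (m:ℤ)*(w.1 - w.2)^2 = (n:ℤ) := by
      push_cast at hC2
      linear_combination hC2
    have hxb : (w.1 + w.2)^2 ≤ (n:ℤ) := by
      have hmz : (1:ℤ) ≤ (m:ℤ) := by exact_mod_cast hm
      nlinarith [sq_nonneg (w.1 - w.2), sq_nonneg (w.1 + w.2)]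
    have hyb : (w.1 - w.2)^2 ≤ (n:ℤ) := by
      have hmz : (1:ℤ) ≤ (m:ℤ) := by exact_mod_cast hm
      nlinarith [sq_nonneg (w.1 - w.2), sq_nonneg (w.1 + w.2)]
    obtain ⟨hx1, hx2⟩ := int_bound hxb
    obtain ⟨hy1, hy2⟩ := int_bound hyb
    exact ⟨⟨⟨⟨hx1, hx2⟩, hy1, hy2⟩, hC⟩, ⟨w.1, by ring⟩⟩
  · -- left inverse
    intro z hz
    simp only [Finset.mem_filter] at hz
    obtain ⟨r, hr⟩ := hz.2
    have : Even (z.1 - z.2) := ⟨z.1 - r, by omega⟩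
    obtain ⟨t, ht⟩ := this
    ext
    · simp only; omega
    · simp only; omega
  · -- right inverse
    intro w hw
    ext
    · simp only; omega
    · simp only; omega
  · -- values
    intro z hz
    simp only [Finset.mem_filter] at hz
    obtain ⟨r, hr⟩ := hz.2
    have hv' : Even (z.1 - z.2) := ⟨z.1 - r, by omega⟩
    obtain ⟨t, ht⟩ := hv'
    simp only [one_mul, sgn]
    have hpar : z.2.natAbs % 2 = (((z.1 + z.2)/2).natAbs + ((z.1 - z.2)/2).natAbs) % 2 := by
      omega
    rw [int_neg_one_pow_congr hpar, pow_add]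

theorem phi_mul (m : ℕ) (hm : 1 ≤ m) : phi m * phiNegM m = phiNegM (2*m) ^ 2 := by
  refine PowerSeries.ext fun n => ?_
  have hL := conv_eval (f := fun _ => (1:ℤ)) (g := sgn) hm n
    (fun a ha => coeff_phi hm ha) (fun b hb => coeff_phiNegM hm hb)
  have hR := conv_eval (f := sgn) (g := sgn) (M := 2*m) (by omega) n
    (fun a ha => coeff_phiNegM (by omega) ha) (fun b hb => coeff_phiNegM (by omega) hb)
  rw [pow_two, hL, hR]
  exact key_sum m n hm





lemma phi_close (m : ℕ) (hm : 1 ≤ m) : (X : PowerSeries ℤ) ^ m ∣ phi m - 1 := by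
  rw [PowerSeries.X_pow_dvd_iff]
  intro t ht
  rw [map_sub, phi, coeff_mk, PowerSeries.coeff_one]
  by_cases h0 : t = 0
  · rw [if_pos h0, if_pos h0]; ring
  · rw [if_neg h0, if_neg h0, if_neg, sub_zero]
    intro ⟨k, hk, hkt⟩
    have : m * 1 ≤ m * k ^ 2 := Nat.mul_le_mul_left m (by nlinarith)
    omega

lemma phiNegM_close (m : ℕ) (hm : 1 ≤ m) : (X : PowerSeries ℤ) ^ m ∣ phiNegM m - 1 := by
  rw [PowerSeries.X_pow_dvd_iff]
  intro t ht
  rw [map_sub, phiNegM, coeff_mk, PowerSeries.coeff_one]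
  by_cases h0 : t = 0
  · rw [if_pos h0, if_pos h0]; ring
  · rw [if_neg h0, if_neg h0, if_neg, sub_zero]
    intro ⟨k, hk, hkt⟩
    have : m * 1 ≤ m * k ^ 2 := Nat.mul_le_mul_left m (by nlinarith)
    omega

lemma hf_phi : ∀ i, (X : PowerSeries ℤ) ^ (i+1) ∣ phi (2^i) ^ (2^i) - 1 := by
  intro i
  have h1 : (X : PowerSeries ℤ) ^ (i+1) ∣ phi (2^i) - 1 := by
    refine dvd_trans (pow_dvd_pow X ?_) (phi_close (2^i) Nat.one_le_two_pow)
    exact Nat.lt_two_pow_self (n := i)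
  have h2 : phi (2^i) - 1 ∣ phi (2^i) ^ (2^i) - 1 := by
    have := sub_dvd_pow_sub_pow (phi (2^i)) 1 (2^i)
    rwa [one_pow] at this
  exact dvd_trans h1 h2

lemma K (N : ℕ) :
    phiNeg * ∏ i ∈ range N, phi (2^i) ^ (2^i) = phiNegM (2^N) ^ (2^N) := by
  induction N with
  | zero =>
    rw [Finset.range_zero, Finset.prod_empty, mul_one, pow_zero, pow_one, phiNegM_one]
  | succ N ih =>
    rw [Finset.prod_range_succ, ← mul_assoc, ih, ← mul_pow, mul_comm, phi_mul (2^N) Nat.one_le_two_pow,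
      ← pow_mul, show 2*2^N = 2^(N+1) from by rw [pow_succ]; ring]

theorem phiNeg_mul_B : phiNeg * seriesProd (fun i => phi (2^i) ^ 2^i) = 1 := by
  refine PowerSeries.ext fun N => ?_
  apply coeff_eq_of_dvd (n := N)
  have hB := seriesProd_sub_dvd hf_phi N
  have h2 : (X : PowerSeries ℤ) ^ (N+1) ∣ phiNegM (2^(N+1)) ^ (2^(N+1)) - 1 := by
    have ha : (X : PowerSeries ℤ) ^ (N+1) ∣ phiNegM (2^(N+1)) - 1 := by
      refine dvd_trans (pow_dvd_pow X ?_) (phiNegM_close (2^(N+1)) Nat.one_le_two_pow)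
      exact (Nat.lt_two_pow_self (n := N+1)).le
    have hb : phiNegM (2^(N+1)) - 1 ∣ phiNegM (2^(N+1)) ^ (2^(N+1)) - 1 := by
      have := sub_dvd_pow_sub_pow (phiNegM (2^(N+1))) 1 (2^(N+1))
      rwa [one_pow] at this
    exact dvd_trans ha hb
  have total : phiNeg * seriesProd (fun i => phi (2^i) ^ 2^i) - 1
      = phiNeg * (seriesProd (fun i => phi (2^i) ^ 2^i) - ∏ i ∈ range (N+1), phi (2^i) ^ (2^i))
        + (phiNeg * ∏ i ∈ range (N+1), phi (2^i) ^ (2^i) - 1) := by ring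
  rw [total, K (N+1)]
  exact dvd_add (hB.mul_left _) h2

lemma phiNeg_ne_zero : phiNeg ≠ 0 := by
  intro h
  have := congrArg (coeff 0) h
  rw [phiNeg, coeff_mk] at this
  simp at this





end OverAux

/-- For every `t ≥ 1`, `∑_{n ≥ 0} p̄_{-t}(n) qⁿ = ( ∏_{i ≥ 0} φ(q^{2^i})^{2^i} )^t`. -/
theorem overpartition_genfun (t : ℕ) (ht1 : 1 ≤ t) :
    PowerSeries.mk (fun n => pbar t n) =
      (seriesProd fun i => phi (2 ^ i) ^ 2 ^ i) ^ t := by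
  have h0 : PowerSeries.mk (fun n => pbar t n) = overGF t :=
    PowerSeries.ext fun n => by rw [PowerSeries.coeff_mk, pbar]
  rw [h0, OverAux.overGF_pow]
  have hAB : overGF 1 = seriesProd fun i => phi (2 ^ i) ^ 2 ^ i := by
    apply mul_left_cancel₀ OverAux.phiNeg_ne_zero
    rw [OverAux.phiNeg_mul_A, OverAux.phiNeg_mul_B]
  rw [hAB]
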